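/- For integers n > 2k + t + 2, k > 2t + 1, q ≥ 3: θ_k + Σ_{j=0}^{k-t-2} [k-t+1 choose j+1]_q · q^{(k-t-j)(k-t-j-1)} · [n-k-1 choose k-t-j-1]_q > q^2·θ_{t-1}·[n-t-1 choose k-t-1]_q + (θ_{k-t})^2·[n-t-2 choose k-t-2]_q + θ_{k-t-1}·[n-t-1 choose k-t-1]_q. -/

import Mathlib

/-- Gaussian binomial coefficient `[n choose k]_q` as a real number,
with the convention that it is `0` for `k < 0` (and for `k > n`). -/
noncomputable def gbin (q n : ℕ) (k : ℤ) : ℝ :=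
  if 0 ≤ k then ∏ i ∈ Finset.range k.toNat, ((q:ℝ)^(n-i) - 1)/((q:ℝ)^(i+1) - 1) else 0

/-- `θ_m = (q^{m+1}-1)/(q-1)`, the number of points of `PG(m,q)`. -/
noncomputable def theta (q m : ℕ) : ℝ := ((q:ℝ)^(m+1) - 1)/((q:ℝ) - 1)

namespace Stmt19

noncomputable def P (q a m : ℕ) : ℝ :=
  ∏ i ∈ Finset.range m, ((q:ℝ)^(a-i) - 1)/((q:ℝ)^(i+1) - 1)

lemma gbin_natCast (q a m : ℕ) : gbin q a (m:ℤ) = P q a m := by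
  simp [gbin, P]

lemma P_one (q a : ℕ) : P q a 1 = ((q:ℝ)^a - 1)/((q:ℝ) - 1) := by
  simp [P]

lemma P_succ (q a mm : ℕ) :
    P q a (mm+1) = P q a mm * (((q:ℝ)^(a-mm) - 1)/((q:ℝ)^(mm+1) - 1)) :=
  Finset.prod_range_succ _ _

variable {q : ℕ}

lemma fac_nonneg (hq : 3 ≤ q) (a i : ℕ) :
    0 ≤ ((q:ℝ)^(a-i) - 1)/((q:ℝ)^(i+1) - 1) := by
  have h3 : (3:ℝ) ≤ (q:ℝ) := by exact_mod_cast hq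
  have h1 : (1:ℝ) ≤ (q:ℝ)^(a-i) := one_le_pow₀ (by linarith)
  have h2 : (1:ℝ) < (q:ℝ)^(i+1) := one_lt_pow₀ (by linarith) (by omega)
  exact div_nonneg (by linarith) (by linarith)

lemma P_nonneg (hq : 3 ≤ q) (a m : ℕ) : 0 ≤ P q a m :=
  Finset.prod_nonneg fun i _ => fac_nonneg hq a i

lemma gbin_nonneg (hq : 3 ≤ q) (a : ℕ) (z : ℤ) : 0 ≤ gbin q a z := by
  unfold gbin
  split
  · exact Finset.prod_nonneg fun i _ => fac_nonneg hq a i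
  · exact le_refl 0

lemma aux_step (c Q : ℝ) (hc : 3 ≤ c) (hQ : 3 ≤ Q) :
    1 - 2/c ≤ (1 - 2/(c*Q))*(1 - 1/c) := by
  have hc0 : (0:ℝ) < c := by linarith
  have hQ0 : (0:ℝ) < Q := by linarith
  have key : (1 - 2/(c*Q))*(1 - 1/c) - (1 - 2/c) = (c*(Q-2) + 2)/(c^2*Q) := by
    field_simp
    ring
  nlinarith [div_nonneg (by nlinarith : (0:ℝ) ≤ c*(Q-2)+2) (by positivity : (0:ℝ) ≤ c^2*Q), key]

lemma prodLB (hq : 3 ≤ q) (b : ℕ) :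
    ∀ m, m ≤ b → 1 - 2/(q:ℝ)^(b+1-m) ≤ ∏ i ∈ Finset.range m, (1 - (q:ℝ)^i/(q:ℝ)^b) := by
  have h3 : (3:ℝ) ≤ (q:ℝ) := by exact_mod_cast hq
  have hQ0 : (0:ℝ) < (q:ℝ) := by linarith
  intro m
  induction m with
  | zero =>
      intro _
      simp only [Finset.range_zero, Finset.prod_empty]
      have : (0:ℝ) ≤ 2/(q:ℝ)^(b+1-0) := by positivity
      linarith
  | succ m ih =>
      intro hmb
      have ih' := ih (by omega)
      rw [Finset.prod_range_succ]
      have hc3 : (3:ℝ) ≤ (q:ℝ)^(b-m) := by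
        calc (3:ℝ) ≤ (q:ℝ) := h3
        _ = (q:ℝ)^1 := (pow_one _).symm
        _ ≤ (q:ℝ)^(b-m) := pow_le_pow_right₀ (by linarith) (by omega)
      have hsplit : (q:ℝ)^b = (q:ℝ)^m * (q:ℝ)^(b-m) := by
        rw [← pow_add]; congr 1; omega
      have hB : (q:ℝ)^m/(q:ℝ)^b = 1/(q:ℝ)^(b-m) := by
        rw [hsplit]
        rw [mul_comm]
        field_simp
      have hA : (q:ℝ)^(b+1-m) = (q:ℝ)^(b-m) * (q:ℝ) := by
        rw [← pow_succ]; congr 1; omega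
      have hA2 : (q:ℝ)^(b+1-(m+1)) = (q:ℝ)^(b-m) := by congr 1; omega
      rw [hB, hA2]
      have hfac : (0:ℝ) ≤ 1 - 1/(q:ℝ)^(b-m) := by
        have h1 : 1/(q:ℝ)^(b-m) ≤ 1/3 := by
          apply div_le_div_of_nonneg_left (by norm_num) (by norm_num) hc3
        linarith
      have step1 : (1 - 2/(q:ℝ)^(b+1-m)) * (1 - 1/(q:ℝ)^(b-m)) ≤
          (∏ i ∈ Finset.range m, (1 - (q:ℝ)^i/(q:ℝ)^b)) * (1 - 1/(q:ℝ)^(b-m)) :=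
        mul_le_mul_of_nonneg_right ih' hfac
      have step2 : 1 - 2/(q:ℝ)^(b-m) ≤ (1 - 2/(q:ℝ)^(b+1-m)) * (1 - 1/(q:ℝ)^(b-m)) := by
        rw [hA]
        exact aux_step _ _ hc3 h3
      linarith

lemma aux_fac (x y d : ℝ) (hx : 3 ≤ x) (hy : 1 ≤ y) (hd : 0 < d) :
    ((x*y - 1)/d) * (1 - 1/x) ≤ y * ((x - 1)/d) := by
  have hx0 : (0:ℝ) < x := by linarith
  have key : y * ((x-1)/d) - ((x*y - 1)/d) * (1 - 1/x) = (x-1)/(x*d) := by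
    field_simp
    ring
  nlinarith [div_nonneg (by linarith : (0:ℝ) ≤ x - 1) (by positivity : (0:ℝ) ≤ x*d), key]

lemma ratio (hq : 3 ≤ q) (b d mm : ℕ) (hmb : mm ≤ b) :
    P q (b+d) mm * (1 - 2/(q:ℝ)^(b+1-mm)) ≤ ((q:ℝ)^d)^mm * P q b mm := by
  have h3 : (3:ℝ) ≤ (q:ℝ) := by exact_mod_cast hq
  have hQ0 : (0:ℝ) < (q:ℝ) := by linarith
  have h1 : P q (b+d) mm * (1 - 2/(q:ℝ)^(b+1-mm)) ≤
      P q (b+d) mm * ∏ i ∈ Finset.range mm, (1 - (q:ℝ)^i/(q:ℝ)^b) :=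
    mul_le_mul_of_nonneg_left (prodLB hq b mm hmb) (P_nonneg hq _ _)
  refine h1.trans ?_
  rw [P, ← Finset.prod_mul_distrib]
  have hstep : ∀ i ∈ Finset.range mm,
      ((q:ℝ)^(b+d-i) - 1)/((q:ℝ)^(i+1) - 1) * (1 - (q:ℝ)^i/(q:ℝ)^b) ≤
      (q:ℝ)^d * (((q:ℝ)^(b-i) - 1)/((q:ℝ)^(i+1) - 1)) := by
    intro i hi
    have hib : i < mm := Finset.mem_range.mp hi
    have e1 : (q:ℝ)^(b+d-i) = (q:ℝ)^(b-i) * (q:ℝ)^d := by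
      rw [← pow_add]; congr 1; omega
    have e2 : (q:ℝ)^i/(q:ℝ)^b = 1/(q:ℝ)^(b-i) := by
      rw [show (q:ℝ)^b = (q:ℝ)^(b-i) * (q:ℝ)^i from by rw [← pow_add]; congr 1; omega]
      field_simp
    rw [e1, e2]
    have hx : (3:ℝ) ≤ (q:ℝ)^(b-i) := by
      calc (3:ℝ) ≤ (q:ℝ) := h3
      _ = (q:ℝ)^1 := (pow_one _).symm
      _ ≤ (q:ℝ)^(b-i) := pow_le_pow_right₀ (by linarith) (by omega)
    have hden : (0:ℝ) < (q:ℝ)^(i+1) - 1 := by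
      have : (1:ℝ) < (q:ℝ)^(i+1) := one_lt_pow₀ (by linarith) (by omega)
      linarith
    exact aux_fac _ _ _ hx (one_le_pow₀ (by linarith)) hden
  have hnn : ∀ i ∈ Finset.range mm,
      (0:ℝ) ≤ ((q:ℝ)^(b+d-i) - 1)/((q:ℝ)^(i+1) - 1) * (1 - (q:ℝ)^i/(q:ℝ)^b) := by
    intro i hi
    have hib : i < mm := Finset.mem_range.mp hi
    refine mul_nonneg (fac_nonneg hq _ i) ?_
    have h1' : (q:ℝ)^i ≤ (q:ℝ)^b := pow_le_pow_right₀ (by linarith) (by omega)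
    have h2' : (q:ℝ)^i/(q:ℝ)^b ≤ 1 := by
      apply div_le_one_of_le₀ h1' (by positivity)
    linarith
  refine (Finset.prod_le_prod hnn hstep).trans_eq ?_
  rw [Finset.prod_mul_distrib, Finset.prod_const, P, Finset.card_range]

lemma e1gen (w u : ℝ) (hw : 81 ≤ w) (hu : 9 ≤ u) : (w-1)^2*(u-1) ≤ w^2*u := by
  nlinarith [mul_nonneg (by linarith : (0:ℝ) ≤ w - 81) (by linarith : (0:ℝ) ≤ u),
    mul_nonneg (by linarith : (0:ℝ) ≤ w - 2) (by linarith : (0:ℝ) ≤ w)]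

set_option maxHeartbeats 1000000 in
lemma core (Q u v Y1 g0 g1 g2 p A T : ℝ)
    (hQ : 3 ≤ Q) (hu : Q^2 ≤ u) (hv : Q^6 ≤ v)
    (hg0 : 0 ≤ g0) (hg1 : 0 ≤ g1) (hg2 : 0 ≤ g2) (hp : 0 ≤ p) (hY1 : 0 ≤ Y1)
    (hA : 0 ≤ A) (hAD : A*(Q-1) ≤ 2*Q*u) (hT : T*(Q-1) = Q^2*u - 1)
    (h1 : g1*(727/729) ≤ (Y1*u^2)*g0)
    (h2 : g2*(727/729) ≤ Y1*p)
    (h3 : p*(v-1) = g0*(u-1)) :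
    A*g1 + T^2*g2 ≤ T*((Y1*u^2)*g0) := by
  have hQ2 : (9:ℝ) ≤ Q^2 := by nlinarith
  have hu9 : (9:ℝ) ≤ u := le_trans hQ2 hu
  have hQ4 : (81:ℝ) ≤ Q^4 := by
    have := pow_le_pow_left₀ (by norm_num : (0:ℝ) ≤ 3) hQ 4
    norm_num at this; linarith
  have hQ6 : (729:ℝ) ≤ Q^6 := by
    have := pow_le_pow_left₀ (by norm_num : (0:ℝ) ≤ 3) hQ 6
    norm_num at this; linarith
  have hv729 : (729:ℝ) ≤ v := le_trans hQ6 hv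
  have hD : (2:ℝ) ≤ Q - 1 := by linarith
  have hQ0 : (0:ℝ) < Q := by linarith
  have h81 : (81:ℝ) ≤ Q^2*u := by nlinarith
  have hT0 : (0:ℝ) < T := by nlinarith [hT, h81, hD]
  have hW0 : (0:ℝ) ≤ (Q-1)*u^2*(v-1) :=
    mul_nonneg (mul_nonneg (by linarith) (by positivity)) (by linarith)
  -- the star inequality
  have s1 : 1458*Q*u*((Q-1)*u^2*(v-1)) ≤ 486*(Q^2*u)*((Q-1)*u^2*(v-1)) := by
    have h' : 1458*Q*u ≤ 486*(Q^2*u) := by nlinarith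
    linarith [mul_le_mul_of_nonneg_right h' hW0]
  have h6q : 81*Q^2 ≤ Q^6 := by nlinarith [hQ4, hQ2]
  have w1 : 2*(v-1) ≤ (Q-1)*(v-1) := mul_le_mul_of_nonneg_right hD (by linarith)
  have e2 : 729*Q^2 ≤ 232*((Q-1)*(v-1)) := by linarith [w1, h6q, hv, hQ2]
  have s2 : 729*(Q^2*u-1)^2*(u-1) ≤ 232*(Q^2*u)*((Q-1)*u^2*(v-1)) := by
    have e1 := e1gen (Q^2*u) u h81 hu9
    have e3 : (729*Q^2)*(Q^2*u^3) ≤ (232*((Q-1)*(v-1)))*(Q^2*u^3) :=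
      mul_le_mul_of_nonneg_right e2 (by positivity)
    linarith [e1, e3]
  have s3 : 718*(Q^2*u)*((Q-1)*u^2*(v-1)) ≤ 727*(Q^2*u-1)*((Q-1)*u^2*(v-1)) := by
    have h' : 718*(Q^2*u) ≤ 727*(Q^2*u-1) := by nlinarith [h81]
    linarith [mul_le_mul_of_nonneg_right h' hW0]
  have star : 1458*Q*u*((Q-1)*u^2*(v-1)) + 729*(Q^2*u-1)^2*(u-1) ≤
      727*(Q^2*u-1)*((Q-1)*u^2*(v-1)) := by linarith [s1, s2, s3]
  have star2 : 1458*Q*u*((Q-1)*u^2*(v-1)) + 729*(T*(Q-1))^2*(u-1) ≤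
      727*(T*(Q-1))*((Q-1)*u^2*(v-1)) := by rw [hT]; exact star
  have t1 : (0:ℝ) ≤ g0*(727*(T*(Q-1))*((Q-1)*u^2*(v-1)) - 1458*Q*u*((Q-1)*u^2*(v-1))
      - 729*(T*(Q-1))^2*(u-1)) := mul_nonneg hg0 (by linarith)
  have t2 : (0:ℝ) ≤ (2*Q*u - A*(Q-1)) * (729*((Q-1)*u^2*(v-1)*g0)) :=
    mul_nonneg (by linarith) (mul_nonneg (by norm_num) (mul_nonneg hW0 hg0))
  have comb : 729*(A*((Q-1)^2*(u^2*(v-1)*g0))) + 729*(T^2*((Q-1)^2*((u-1)*g0))) ≤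
      727*(T*((Q-1)^2*(u^2*(v-1)*g0))) := by linarith [t1, t2]
  have h3' : 729*(T^2*((Q-1)^2*(p*(v-1)))) = 729*(T^2*((Q-1)^2*((u-1)*g0))) := by
    rw [h3]; ring
  have comb2 : 729*(A*((Q-1)^2*(u^2*(v-1)*g0))) + 729*(T^2*((Q-1)^2*(p*(v-1)))) ≤
      727*(T*((Q-1)^2*(u^2*(v-1)*g0))) := by rw [h3']; exact comb
  have hpos : (0:ℝ) < (Q-1)^2*(v-1) := by nlinarith
  have comb3 : ((Q-1)^2*(v-1)) * (729*(A*(u^2*g0)) + 729*(T^2*p)) ≤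
      ((Q-1)^2*(v-1)) * (727*(T*(u^2*g0))) := by linarith [comb2]
  have key3 : 729*(A*(u^2*g0)) + 729*(T^2*p) ≤ 727*(T*(u^2*g0)) :=
    (mul_le_mul_iff_right₀ hpos).mp comb3
  have f1 : A*g1 ≤ A*((729/727)*((Y1*u^2)*g0)) :=
    mul_le_mul_of_nonneg_left (by linarith) hA
  have f2 : T^2*g2 ≤ T^2*((729/727)*(Y1*p)) :=
    mul_le_mul_of_nonneg_left (by linarith) (sq_nonneg T)
  have hmul := mul_le_mul_of_nonneg_left key3 hY1
  have f3 : A*((729/727)*((Y1*u^2)*g0)) + T^2*((729/727)*(Y1*p)) ≤ T*((Y1*u^2)*g0) := by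
    linarith [hmul]
  linarith [f1, f2, f3]

end Stmt19

open Stmt19 in
set_option maxHeartbeats 1000000 in
theorem stmt_19 (q n k t : ℕ) (hn : 2*k + t + 2 < n) (hk : 2*t + 1 < k) (ht : 0 < t)
    (hq : 3 ≤ q) :
    (q:ℝ)^2 * theta q (t-1) * gbin q (n-t-1) ((k:ℤ)-t-1) +
      (theta q (k-t))^2 * gbin q (n-t-2) ((k:ℤ)-t-2) +
      theta q (k-t-1) * gbin q (n-t-1) ((k:ℤ)-t-1)
    < theta q k + ∑ j ∈ Finset.range (k-t-1),
        gbin q (k-t+1) ((j:ℤ)+1) * (q:ℝ)^((k-t-j)*(k-t-j-1)) *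
          gbin q (n-k-1) ((k:ℤ)-t-j-1) := by

  have h3 : (3:ℝ) ≤ (q:ℝ) := by exact_mod_cast hq
  have hQ1 : (1:ℝ) < (q:ℝ) := by linarith
  have hQ1' : (1:ℝ) ≤ (q:ℝ) := by linarith
  have hQne : (q:ℝ) - 1 ≠ 0 := ne_of_gt (by linarith : (0:ℝ) < (q:ℝ) - 1)
  set m := k - t - 1 with hm
  set b0 := n - k - 1 with hb0
  have hm2 : 2 ≤ m := by omega
  have hmb0 : m ≤ b0 := by omega
  set e := b0 + 1 - m with he
  have he6 : 6 ≤ e := by omega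
  -- abbreviations for the gaussian binomials
  have hg1e : gbin q (n-t-1) ((k:ℤ)-t-1) = P q (b0+(m+1)) m := by
    rw [show (k:ℤ)-t-1 = ((m:ℕ):ℤ) from by omega, gbin_natCast,
      show n-t-1 = b0+(m+1) from by omega]
  have hg2e : gbin q (n-t-2) ((k:ℤ)-t-2) = P q (b0+m) (m-1) := by
    rw [show (k:ℤ)-t-2 = (((m-1):ℕ):ℤ) from by omega, gbin_natCast,
      show n-t-2 = b0+m from by omega]
  rw [hg1e, hg2e]
  set g1 := P q (b0+(m+1)) m with hg1
  set g2 := P q (b0+m) (m-1) with hg2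
  set g0 := P q b0 m with hg0
  set p := P q b0 (m-1) with hp
  set Tv := theta q (k-t) with hTv
  set Av := (q:ℝ)^2 * theta q (t-1) + theta q m with hAv
  -- ratio bounds
  have h729a : (729:ℝ) ≤ (q:ℝ)^e := by
    calc (729:ℝ) = 3^6 := by norm_num
    _ ≤ (q:ℝ)^6 := pow_le_pow_left₀ (by norm_num) h3 6
    _ ≤ (q:ℝ)^e := pow_le_pow_right₀ hQ1' he6
  have h729b : (729:ℝ) ≤ (q:ℝ)^(e+1) :=
    le_trans h729a (pow_le_pow_right₀ hQ1' (by omega))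
  have hfac1 : (727/729:ℝ) ≤ 1 - 2/(q:ℝ)^e := by
    have h2e : 2/(q:ℝ)^e ≤ 2/729 := by
      apply div_le_div_of_nonneg_left (by norm_num) (by norm_num) h729a
    linarith
  have hfac2 : (727/729:ℝ) ≤ 1 - 2/(q:ℝ)^(e+1) := by
    have h2e : 2/(q:ℝ)^(e+1) ≤ 2/729 := by
      apply div_le_div_of_nonneg_left (by norm_num) (by norm_num) h729b
    linarith
  have hr1 := ratio hq b0 (m+1) m hmb0
  rw [show b0+1-m = e from he.symm] at hr1
  have h1' : g1 * (727/729) ≤ ((q:ℝ)^(m+1))^m * g0 := by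
    calc g1*(727/729) ≤ g1*(1 - 2/(q:ℝ)^e) :=
          mul_le_mul_of_nonneg_left hfac1 (P_nonneg hq _ _)
    _ ≤ _ := hr1
  have hr2 := ratio hq b0 m (m-1) (by omega)
  rw [show b0+1-(m-1) = e+1 from by omega] at hr2
  have h2' : g2 * (727/729) ≤ ((q:ℝ)^m)^(m-1) * p := by
    calc g2*(727/729) ≤ g2*(1 - 2/(q:ℝ)^(e+1)) :=
          mul_le_mul_of_nonneg_left hfac2 (P_nonneg hq _ _)
    _ ≤ _ := hr2
  -- split the big power
  have hsplit : ((q:ℝ)^(m+1))^m = ((q:ℝ)^m)^(m-1)*((q:ℝ)^m)^2 := by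
    rw [← pow_add, show m-1+2 = m+1 from by omega, pow_right_comm]
  rw [hsplit] at h1'
  -- relation between g0 and p
  have hum : ((q:ℝ)^m - 1) ≠ 0 := by
    have : (1:ℝ) < (q:ℝ)^m := one_lt_pow₀ hQ1 (by omega)
    exact ne_of_gt (by linarith)
  have hps := P_succ q b0 (m-1)
  rw [show m-1+1 = m from by omega, show b0-(m-1) = e from by omega] at hps
  have h3' : p * ((q:ℝ)^e - 1) = g0 * ((q:ℝ)^m - 1) := by
    rw [hg0, hps, mul_assoc, div_mul_cancel₀ _ hum, hp]
  -- hypotheses on Av and Tv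
  have hth1 : theta q (t-1) = ((q:ℝ)^t - 1)/((q:ℝ)-1) := by
    rw [theta, show t-1+1 = t from by omega]
  have hthm : theta q m = ((q:ℝ)^(m+1) - 1)/((q:ℝ)-1) := rfl
  have hthk : Tv = ((q:ℝ)^(m+2) - 1)/((q:ℝ)-1) := by
    rw [hTv, theta, show (k-t)+1 = m+2 from by omega]
  have hA0 : 0 ≤ Av := by
    rw [hAv, hth1, hthm]
    have e1 : (1:ℝ) ≤ (q:ℝ)^t := one_le_pow₀ hQ1'
    have e2 : (1:ℝ) ≤ (q:ℝ)^(m+1) := one_le_pow₀ hQ1'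
    have e3 : (0:ℝ) ≤ (q:ℝ)^2 := by positivity
    have d1 : (0:ℝ) ≤ ((q:ℝ)^t - 1)/((q:ℝ)-1) := div_nonneg (by linarith) (by linarith)
    have d2 : (0:ℝ) ≤ ((q:ℝ)^(m+1) - 1)/((q:ℝ)-1) := div_nonneg (by linarith) (by linarith)
    positivity
  have hAle : Av*((q:ℝ)-1) ≤ 2*(q:ℝ)*(q:ℝ)^m := by
    rw [hAv, hth1, hthm]
    have hADe : ((q:ℝ)^2*(((q:ℝ)^t - 1)/((q:ℝ)-1)) + ((q:ℝ)^(m+1) - 1)/((q:ℝ)-1))*((q:ℝ)-1)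
        = (q:ℝ)^2*((q:ℝ)^t-1) + ((q:ℝ)^(m+1)-1) := by
      field_simp
    rw [hADe]
    have e1 : (q:ℝ)^2*(q:ℝ)^t = (q:ℝ)^(t+2) := by rw [pow_add]; ring
    have e2 : (q:ℝ)^(t+2) ≤ (q:ℝ)^(m+1) := pow_le_pow_right₀ hQ1' (by omega)
    have e3 : (q:ℝ)*(q:ℝ)^m = (q:ℝ)^(m+1) := by rw [pow_succ]; ring
    have e4 : (0:ℝ) ≤ (q:ℝ)^2 := by positivity
    nlinarith [e1, e2, e3, e4]
  have hTe : Tv*((q:ℝ)-1) = (q:ℝ)^2*(q:ℝ)^m - 1 := by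
    rw [hthk, div_mul_cancel₀ _ hQne, pow_add]
    ring
  -- apply the core lemma
  have hu : (q:ℝ)^2 ≤ (q:ℝ)^m := pow_le_pow_right₀ hQ1' hm2
  have hv : (q:ℝ)^6 ≤ (q:ℝ)^e := pow_le_pow_right₀ hQ1' he6
  have main := core (q:ℝ) ((q:ℝ)^m) ((q:ℝ)^e) (((q:ℝ)^m)^(m-1)) g0 g1 g2 p Av Tv
    h3 hu hv (P_nonneg hq _ _) (P_nonneg hq _ _) (P_nonneg hq _ _) (P_nonneg hq _ _)
    (by positivity) hA0 hAle hTe h1' h2' h3'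
  rw [← hsplit, show ((q:ℝ)^(m+1))^m = (q:ℝ)^((m+1)*m) from (pow_mul _ _ _).symm] at main
  -- the sum is at least its first term
  have hthk0 : 0 < theta q k := by
    rw [theta]
    apply div_pos
    · have : (1:ℝ) < (q:ℝ)^(k+1) := one_lt_pow₀ hQ1 (by omega)
      linarith
    · linarith
  have hnn : ∀ j ∈ Finset.range m, (0:ℝ) ≤ gbin q (k-t+1) ((j:ℤ)+1) *
      (q:ℝ)^((k-t-j)*(k-t-j-1)) * gbin q b0 ((k:ℤ)-t-j-1) := by
    intro j _
    exact mul_nonneg (mul_nonneg (gbin_nonneg hq _ _) (by positivity)) (gbin_nonneg hq _ _)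
  have hsum := Finset.single_le_sum hnn (Finset.mem_range.mpr (show 0 < m by omega))
  have hf0 : gbin q (k-t+1) (((0:ℕ):ℤ)+1) * (q:ℝ)^((k-t-0)*(k-t-0-1)) *
      gbin q b0 ((k:ℤ)-(t:ℤ)-((0:ℕ):ℤ)-1) = Tv * ((q:ℝ)^((m+1)*m) * g0) := by
    rw [show ((0:ℕ):ℤ)+1 = ((1:ℕ):ℤ) from by norm_num, gbin_natCast,
      show (k:ℤ)-(t:ℤ)-((0:ℕ):ℤ)-1 = ((m:ℕ):ℤ) from by omega, gbin_natCast, P_one]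
    rw [show k-t-0 = m+1 from by omega]
    rw [show m+1-1 = m from by omega]
    rw [hthk]
    rw [show k-t+1 = m+2 from by omega]
    rw [← hg0]
    ring
  rw [hf0] at hsum
  have step1 : (q:ℝ)^2 * theta q (t-1) * g1 + Tv^2 * g2 + theta q m * g1
      = Av*g1 + Tv^2*g2 := by rw [hAv]; ring
  rw [step1]
  exact lt_of_le_of_lt main (lt_of_lt_of_le (by linarith) (add_le_add (le_refl (theta q k)) hsum))
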